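/- For every x ∈ (0, π/2) and every positive integer n, 3 + (1/cos x)·Σ_{k=2}^{2n+1} (-1)^{k} C(k) x^{2k} < 2·(sin x / x) + (tan x)/x < 3 + (1/cos x)·Σ_{k=2}^{2n} (-1)^{k} C(k) x^{2k}. -/

import Mathlib

open Real Finset

/-- The coefficient `C(k) = 2·(4^k - 3k - 1)/(2k+1)!`. -/
noncomputable def wchC (k : ℕ) : ℝ :=
  2 * ((4 : ℝ) ^ k - 3 * (k : ℝ) - 1) / (Nat.factorial (2 * k + 1) : ℝ)

lemma wch_nat1 (k : ℕ) : 3 * k + 1 ≤ 4 ^ k := by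
  induction k with
  | zero => simp
  | succ k ih =>
    have h1 : 1 ≤ 4 ^ k := Nat.one_le_pow _ _ (by norm_num)
    have h2 : 4 ^ (k + 1) = 4 * 4 ^ k := by ring
    omega

lemma wch_nat2 (k : ℕ) (hk : 2 ≤ k) : 3 * k + 2 ≤ 4 ^ k := by
  induction k with
  | zero => omega
  | succ k ih =>
    rcases Nat.lt_or_ge k 2 with h | h
    · interval_cases k <;> omega
    · have h1 := ih h
      have h2 : 4 ^ (k + 1) = 4 * 4 ^ k := by ring
      omega

lemma wch_nat3 (k : ℕ) (hk : 2 ≤ k) : 57 * k + 13 ≤ 13 * 4 ^ k := by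
  induction k with
  | zero => omega
  | succ k ih =>
    rcases Nat.lt_or_ge k 2 with h | h
    · interval_cases k <;> first | omega | norm_num
    · have h1 := ih h
      have h2 : 4 ^ (k + 1) = 4 * 4 ^ k := by ring
      omega

lemma wch_cast1 (k : ℕ) : 3 * (k : ℝ) + 1 ≤ 4 ^ k := by
  have := wch_nat1 k
  have h : ((3 * k + 1 : ℕ) : ℝ) ≤ ((4 ^ k : ℕ) : ℝ) := Nat.cast_le.2 this
  push_cast at h
  linarith

lemma wch_cast2 (k : ℕ) (hk : 2 ≤ k) : 3 * (k : ℝ) + 2 ≤ 4 ^ k := by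
  have := wch_nat2 k hk
  have h : ((3 * k + 2 : ℕ) : ℝ) ≤ ((4 ^ k : ℕ) : ℝ) := Nat.cast_le.2 this
  push_cast at h
  linarith

lemma wch_cast3 (k : ℕ) (hk : 2 ≤ k) : 57 * (k : ℝ) + 13 ≤ 13 * 4 ^ k := by
  have := wch_nat3 k hk
  have h : ((57 * k + 13 : ℕ) : ℝ) ≤ ((13 * 4 ^ k : ℕ) : ℝ) := Nat.cast_le.2 this
  push_cast at h
  linarith

lemma wchC_nonneg (k : ℕ) : 0 ≤ wchC k := by
  unfold wchC
  apply div_nonneg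
  · have := wch_cast1 k
    linarith
  · positivity

lemma wchC_pos {k : ℕ} (hk : 2 ≤ k) : 0 < wchC k := by
  unfold wchC
  apply div_pos
  · have := wch_cast2 k hk
    linarith
  · positivity

lemma wchC_decay {k : ℕ} (hk : 2 ≤ k) : 4 * wchC (k + 1) ≤ wchC k := by
  unfold wchC
  have hfact : (Nat.factorial (2 * (k + 1) + 1) : ℝ)
      = (2 * (k : ℝ) + 3) * ((2 * (k : ℝ) + 2) * (Nat.factorial (2 * k + 1) : ℝ)) := by
    have : 2 * (k + 1) + 1 = (2 * k + 1) + 1 + 1 := by ring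
    rw [this, Nat.factorial_succ, Nat.factorial_succ]
    push_cast
    ring
  have hF : (0 : ℝ) < (Nat.factorial (2 * k + 1) : ℝ) := by positivity
  have hkR : (2 : ℝ) ≤ (k : ℝ) := by exact_mod_cast hk
  have h1 : (0 : ℝ) ≤ (4 : ℝ) ^ k - 3 * (k : ℝ) - 1 := by
    have := wch_cast1 k; linarith
  have h2 : (42 : ℝ) ≤ (2 * (k : ℝ) + 2) * (2 * (k : ℝ) + 3) := by nlinarith
  have h3 := wch_cast3 k hk
  have h4 : (4 : ℝ) ^ (k + 1) = 4 * 4 ^ k := by ring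
  have key : 4 * (2 * ((4 : ℝ) ^ (k + 1) - 3 * ((k : ℝ) + 1) - 1))
      ≤ 2 * ((4 : ℝ) ^ k - 3 * (k : ℝ) - 1) * ((2 * (k : ℝ) + 2) * (2 * (k : ℝ) + 3)) := by
    rw [h4]
    nlinarith [mul_nonneg h1 (by linarith : (0:ℝ) ≤ (2 * (k : ℝ) + 2) * (2 * (k : ℝ) + 3) - 42)]
  rw [hfact, ← mul_div_assoc, div_le_div_iff₀ (by positivity) hF]
  push_cast
  nlinarith [mul_le_mul_of_nonneg_right key (le_of_lt hF)]

/-- Strict positivity of an alternating series with decreasing nonnegative terms. -/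
lemma wch_alt_pos (b : ℕ → ℝ) (hnn : ∀ j, 0 ≤ b j) (hdec : ∀ j, b (j + 1) ≤ b j)
    (hstrict : b 1 < b 0) (hs : Summable fun j => (-1 : ℝ) ^ j * b j) :
    0 < ∑' j, (-1 : ℝ) ^ j * b j := by
  have hb : Summable b := by
    have habs := hs.abs
    have : (fun j => |(-1 : ℝ) ^ j * b j|) = b := by
      funext j
      rw [abs_mul, abs_pow, abs_neg, abs_one, one_pow, one_mul, abs_of_nonneg (hnn j)]
    rwa [this] at habs
  have hinj1 : Function.Injective (fun i : ℕ => 2 * i) := fun a b h => by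
    simp only [] at h; omega
  have hinj2 : Function.Injective (fun i : ℕ => 2 * i + 1) := fun a b h => by
    simp only [] at h; omega
  have heven : Summable (fun i => b (2 * i)) := by
    have := hb.comp_injective hinj1
    exact this
  have hodd : Summable (fun i => b (2 * i + 1)) := by
    have := hb.comp_injective hinj2
    exact this
  have he : Summable (fun i => (-1 : ℝ) ^ (2 * i) * b (2 * i)) := by
    simpa [pow_mul] using heven
  have ho : Summable (fun i => (-1 : ℝ) ^ (2 * i + 1) * b (2 * i + 1)) := by
    simpa [pow_succ, pow_mul] using hodd.neg
  have hsplit := tsum_even_add_odd (f := fun j => (-1 : ℝ) ^ j * b j) he ho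
  have he' : (∑' i, (-1 : ℝ) ^ (2 * i) * b (2 * i)) = ∑' i, b (2 * i) := by
    congr 1; funext i; simp [pow_mul]
  have ho' : (∑' i, (-1 : ℝ) ^ (2 * i + 1) * b (2 * i + 1)) = -∑' i, b (2 * i + 1) := by
    rw [← tsum_neg]; congr 1; funext i; simp [pow_succ, pow_mul]
  rw [he', ho'] at hsplit
  rw [← hsplit, ← sub_eq_add_neg, ← Summable.tsum_sub heven hodd]
  exact Summable.tsum_pos (heven.sub hodd) (fun i => sub_nonneg.2 (hdec (2 * i))) 0
    (by simpa using sub_pos.2 hstrict)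

theorem two_sinx_div_x_add_tanx_div_x_bounds :
    ∀ x ∈ Set.Ioo (0 : ℝ) (π / 2), ∀ n : ℕ, 1 ≤ n →
      3 + (1 / Real.cos x) *
            (∑ k ∈ Finset.Icc 2 (2 * n + 1), (-1 : ℝ) ^ k * wchC k * x ^ (2 * k))
          < 2 * (Real.sin x / x) + Real.tan x / x ∧
      2 * (Real.sin x / x) + Real.tan x / x
          < 3 + (1 / Real.cos x) *
            (∑ k ∈ Finset.Icc 2 (2 * n), (-1 : ℝ) ^ k * wchC k * x ^ (2 * k)) := by
  intro x hx n hn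
  obtain ⟨hx0, hxpi⟩ := hx
  have hxne : x ≠ 0 := ne_of_gt hx0
  have hcos : 0 < Real.cos x :=
    Real.cos_pos_of_mem_Ioo ⟨by linarith [Real.pi_pos], hxpi⟩
  have hx2 : x < 2 := by
    have := Real.pi_lt_d2
    linarith
  have hx4 : x ^ 2 < 4 := by nlinarith
  set f : ℕ → ℝ := fun k => (-1 : ℝ) ^ k * wchC k * x ^ (2 * k) with hf
  -- decrease of absolute values
  have hadec : ∀ k, 2 ≤ k → wchC (k + 1) * x ^ (2 * (k + 1)) < wchC k * x ^ (2 * k) := by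
    intro k hk
    have hp : 0 < wchC (k + 1) := wchC_pos (by omega)
    have hd := wchC_decay hk
    have hxx : (0 : ℝ) < x ^ (2 * k) := by positivity
    have hexp : x ^ (2 * (k + 1)) = x ^ (2 * k) * x ^ 2 := by ring
    rw [hexp]
    calc wchC (k + 1) * (x ^ (2 * k) * x ^ 2)
        < wchC (k + 1) * (x ^ (2 * k) * 4) := by
          apply mul_lt_mul_of_pos_left _ hp
          exact mul_lt_mul_of_pos_left hx4 hxx
      _ = 4 * wchC (k + 1) * x ^ (2 * k) := by ring
      _ ≤ wchC k * x ^ (2 * k) := mul_le_mul_of_nonneg_right hd (le_of_lt hxx)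
  -- summability
  have hsa : Summable (fun k => wchC k * x ^ (2 * k)) := by
    have hbsum : Summable (fun k : ℕ => 2 * ((4 * x ^ 2) ^ k / (Nat.factorial k : ℝ))) :=
      (Real.summable_pow_div_factorial (4 * x ^ 2)).mul_left 2
    refine Summable.of_nonneg_of_le
      (fun k => mul_nonneg (wchC_nonneg k) (by positivity)) (fun k => ?_) hbsum
    have hfle : (Nat.factorial k : ℝ) ≤ (Nat.factorial (2 * k + 1) : ℝ) :=
      Nat.cast_le.2 (Nat.factorial_le (by omega))
    have hfpos : (0 : ℝ) < (Nat.factorial k : ℝ) :=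
      Nat.cast_pos.2 (Nat.factorial_pos _)
    have hFpos : (0 : ℝ) < (Nat.factorial (2 * k + 1) : ℝ) :=
      Nat.cast_pos.2 (Nat.factorial_pos _)
    have hnum : 2 * ((4 : ℝ) ^ k - 3 * (k : ℝ) - 1) ≤ 2 * (4 : ℝ) ^ k := by
      have : (0 : ℝ) ≤ (k : ℝ) := Nat.cast_nonneg k
      linarith
    have h1 : wchC k ≤ 2 * (4 : ℝ) ^ k / (Nat.factorial k : ℝ) := by
      unfold wchC
      calc 2 * ((4 : ℝ) ^ k - 3 * (k : ℝ) - 1) / (Nat.factorial (2 * k + 1) : ℝ)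
          ≤ 2 * (4 : ℝ) ^ k / (Nat.factorial (2 * k + 1) : ℝ) :=
            div_le_div_of_nonneg_right hnum hFpos.le
        _ ≤ 2 * (4 : ℝ) ^ k / (Nat.factorial k : ℝ) :=
            div_le_div_of_nonneg_left (by positivity) hfpos hfle
    calc wchC k * x ^ (2 * k) ≤ (2 * (4 : ℝ) ^ k / (Nat.factorial k : ℝ)) * x ^ (2 * k) :=
          mul_le_mul_of_nonneg_right h1 (by positivity)
      _ = 2 * ((4 * x ^ 2) ^ k / (Nat.factorial k : ℝ)) := by
          rw [pow_mul, mul_pow]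
          ring
  have hsf : Summable f := by
    apply Summable.of_abs
    have : (fun k => |f k|) = fun k => wchC k * x ^ (2 * k) := by
      funext k
      rw [hf]
      rw [abs_mul, abs_mul, abs_pow, abs_neg, abs_one, one_pow, one_mul,
        abs_of_nonneg (wchC_nonneg k), abs_pow, abs_of_nonneg (le_of_lt hx0)]
    rw [this]
    exact hsa
  -- the sum identity
  have hsum : HasSum f ((Real.sin (2 * x) + Real.sin x - 3 * x * Real.cos x) / x) := by
    have h1 := Real.hasSum_sin (2 * x)
    have h2 := Real.hasSum_sin x
    have h3 := (Real.hasSum_cos x).mul_left (3 * x)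
    have h := (h1.add h2).sub h3
    have heq : ∀ k : ℕ,
        ((-1 : ℝ) ^ k * (2 * x) ^ (2 * k + 1) / ((Nat.factorial (2 * k + 1) : ℝ))
          + (-1 : ℝ) ^ k * x ^ (2 * k + 1) / ((Nat.factorial (2 * k + 1) : ℝ)))
          - 3 * x * ((-1 : ℝ) ^ k * x ^ (2 * k) / ((Nat.factorial (2 * k) : ℝ)))
        = f k * x := by
      intro k
      rw [hf]
      simp only []
      unfold wchC
      have hfs : (Nat.factorial (2 * k + 1) : ℝ)
          = (2 * (k : ℝ) + 1) * (Nat.factorial (2 * k) : ℝ) := by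
        rw [Nat.factorial_succ]; push_cast; ring
      have hne : (Nat.factorial (2 * k) : ℝ) ≠ 0 := by positivity
      have h2x : (2 * x) ^ (2 * k + 1) = 2 * 2 ^ (2 * k) * x ^ (2 * k + 1) := by
        rw [mul_pow, pow_succ]
        ring
      have h4 : (4 : ℝ) ^ k = 2 ^ (2 * k) := by
        rw [pow_mul]; norm_num
      rw [hfs, h2x, h4]
      have h21 : (2 * (k : ℝ) + 1) ≠ 0 := by positivity
      field_simp
      ring
    have hfuneq : (fun k : ℕ =>
        ((-1 : ℝ) ^ k * (2 * x) ^ (2 * k + 1) / ((Nat.factorial (2 * k + 1) : ℝ))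
          + (-1 : ℝ) ^ k * x ^ (2 * k + 1) / ((Nat.factorial (2 * k + 1) : ℝ)))
          - 3 * x * ((-1 : ℝ) ^ k * x ^ (2 * k) / ((Nat.factorial (2 * k) : ℝ))))
        = fun k => f k * x := funext heq
    rw [hfuneq] at h
    have h2 := h.div_const x
    have hcancel : (fun k => f k * x / x) = f := by
      funext k
      field_simp
    rwa [hcancel] at h2
  -- key closed form
  have hkey : 2 * (Real.sin x / x) + Real.tan x / x = 3 + (1 / Real.cos x) * ∑' k, f k := by
    rw [hsum.tsum_eq, Real.tan_eq_sin_div_cos, Real.sin_two_mul]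
    field_simp
    ring
  -- first two terms vanish
  have hf0 : f 0 = 0 := by simp [hf, wchC]
  have hf1 : f 1 = 0 := by
    simp only [hf, wchC]
    norm_num
  -- finite sums over Icc equal sums over range
  have hIcc : ∀ m : ℕ, 2 ≤ m →
      (∑ k ∈ Finset.Icc 2 m, f k) = ∑ k ∈ Finset.range (m + 1), f k := by
    intro m hm
    have h1 : Finset.Icc 2 m = Finset.Ico 2 (m + 1) := by
      rw [Finset.Ico_add_one_right_eq_Icc]
    have h2 : Finset.range (m + 1) = Finset.Ico 0 (m + 1) := by rw [Finset.range_eq_Ico]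
    rw [h1, h2, ← Finset.sum_Ico_consecutive f (by omega : 0 ≤ 2) (by omega : 2 ≤ m + 1)]
    have h3 : (∑ k ∈ Finset.Ico 0 2, f k) = 0 := by
      rw [← Finset.range_eq_Ico]
      rw [Finset.sum_range_succ, Finset.sum_range_one, hf0, hf1]
      norm_num
    rw [h3, zero_add]
  -- tail positivity from an even starting index
  have htail : ∀ m : ℕ, 2 ≤ m → Even m → 0 < ∑' i, f (i + m) := by
    intro m hm hme
    have hEq : (fun i => f (i + m)) = fun i => (-1 : ℝ) ^ i * (wchC (i + m) * x ^ (2 * (i + m))) := by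
      funext i
      rw [hf]
      simp only []
      rw [pow_add, hme.neg_one_pow]
      ring
    have hsumtail : Summable (fun i => f (i + m)) := (summable_nat_add_iff m).2 hsf
    rw [hEq] at hsumtail ⊢
    apply wch_alt_pos
    · intro j
      exact mul_nonneg (wchC_nonneg _) (by positivity)
    · intro j
      have := hadec (j + m) (by omega)
      have harith : j + 1 + m = (j + m) + 1 := by omega
      rw [harith]
      exact le_of_lt this
    · have := hadec (0 + m) (by omega)
      have harith : 1 + m = (0 + m) + 1 := by omega
      rw [harith]
      exact this
    · exact hsumtail
  -- tail negativity from an odd starting index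
  have htailneg : ∀ m : ℕ, 3 ≤ m → Odd m → (∑' i, f (i + m)) < 0 := by
    intro m hm hmo
    have hEq : (fun i => f (i + m)) = fun i => -((-1 : ℝ) ^ i * (wchC (i + m) * x ^ (2 * (i + m)))) := by
      funext i
      rw [hf]
      simp only []
      rw [pow_add, hmo.neg_one_pow]
      ring
    have hsumtail : Summable (fun i => f (i + m)) := (summable_nat_add_iff m).2 hsf
    rw [hEq] at hsumtail ⊢
    rw [tsum_neg]
    rw [neg_lt, neg_zero]
    apply wch_alt_pos
    · intro j
      exact mul_nonneg (wchC_nonneg _) (by positivity)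
    · intro j
      have := hadec (j + m) (by omega)
      have harith : j + 1 + m = (j + m) + 1 := by omega
      rw [harith]
      exact le_of_lt this
    · have := hadec (0 + m) (by omega)
      have harith : 1 + m = (0 + m) + 1 := by omega
      rw [harith]
      exact this
    · simpa using hsumtail.neg
  -- the two strict inequalities on sums
  have hlow : (∑ k ∈ Finset.Icc 2 (2 * n + 1), f k) < ∑' k, f k := by
    rw [hIcc (2 * n + 1) (by omega)]
    have hsplit := Summable.sum_add_tsum_nat_add (2 * n + 1 + 1) hsf
    have hpos := htail (2 * n + 1 + 1) (by omega) ⟨n + 1, by ring⟩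
    linarith
  have hhigh : (∑' k, f k) < ∑ k ∈ Finset.Icc 2 (2 * n), f k := by
    rw [hIcc (2 * n) (by omega)]
    have hsplit := Summable.sum_add_tsum_nat_add (2 * n + 1) hsf
    have hneg := htailneg (2 * n + 1) (by omega) ⟨n, by ring⟩
    linarith
  have hconv : ∀ m : ℕ, (∑ k ∈ Finset.Icc 2 m, (-1 : ℝ) ^ k * wchC k * x ^ (2 * k))
      = ∑ k ∈ Finset.Icc 2 m, f k := by
    intro m
    simp only [hf]
  have hinv : 0 < 1 / Real.cos x := one_div_pos.2 hcos
  refine ⟨?_, ?_⟩ <;> rw [hkey, hconv]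
  · exact add_lt_add_right (mul_lt_mul_of_pos_left hlow hinv) 3
  · exact add_lt_add_right (mul_lt_mul_of_pos_left hhigh hinv) 3
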